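/- For every bounded linear operator A on a complex Hilbert space, w³(A) ≤ (1/4)[ w(A³) + ‖A‖·‖A²‖ + w(A)·‖A*A + AA*‖ ]. -/

import Mathlib

open scoped InnerProductSpace
open ContinuousLinearMap

/-- The numerical radius of a bounded linear operator. -/
noncomputable def numRadius {H : Type*} [NormedAddCommGroup H] [InnerProductSpace ℂ H]
    (A : H →L[ℂ] H) : ℝ :=
  sSup {r : ℝ | ∃ x : H, ‖x‖ = 1 ∧ r = ‖⟪A x, x⟫_ℂ‖}

/-- The Crawford number of a bounded linear operator. -/
noncomputable def crawford {H : Type*} [NormedAddCommGroup H] [InnerProductSpace ℂ H]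
    (A : H →L[ℂ] H) : ℝ :=
  sInf {r : ℝ | ∃ x : H, ‖x‖ = 1 ∧ r = ‖⟪A x, x⟫_ℂ‖}

/-- The real part of a bounded linear operator. -/
noncomputable def reP {H : Type*} [NormedAddCommGroup H] [InnerProductSpace ℂ H]
    [CompleteSpace H] (A : H →L[ℂ] H) : H →L[ℂ] H :=
  ((2 : ℂ)⁻¹) • (A + adjoint A)

/-- The imaginary part of a bounded linear operator. -/
noncomputable def imP {H : Type*} [NormedAddCommGroup H] [InnerProductSpace ℂ H]
    [CompleteSpace H] (A : H →L[ℂ] H) : H →L[ℂ] H :=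
  ((2 * Complex.I)⁻¹) • (A - adjoint A)

section aux

variable {H : Type*} [NormedAddCommGroup H] [InnerProductSpace ℂ H]

lemma numR_bddAbove (A : H →L[ℂ] H) :
    BddAbove {r : ℝ | ∃ x : H, ‖x‖ = 1 ∧ r = ‖⟪A x, x⟫_ℂ‖} := by
  refine ⟨‖A‖, ?_⟩
  rintro r ⟨x, hx, rfl⟩
  calc ‖⟪A x, x⟫_ℂ‖ ≤ ‖A x‖ * ‖x‖ := norm_inner_le_norm _ _
    _ ≤ (‖A‖ * ‖x‖) * ‖x‖ := by
        have := A.le_opNorm x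
        nlinarith [norm_nonneg x]
    _ = ‖A‖ := by rw [hx]; ring

lemma le_numR (A : H →L[ℂ] H) {x : H} (hx : ‖x‖ = 1) :
    ‖⟪A x, x⟫_ℂ‖ ≤ numRadius A :=
  le_csSup (numR_bddAbove A) ⟨x, hx, rfl⟩

lemma numR_nonneg [Nontrivial H] (A : H →L[ℂ] H) : 0 ≤ numRadius A := by
  obtain ⟨x, hx⟩ := exists_norm_eq H (zero_le_one)
  exact le_trans (norm_nonneg _) (le_numR A hx)

/-- rescaled bound for the quadratic form of an operator -/
lemma inner_self_le (T : H →L[ℂ] H) {M : ℝ}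
    (hM : ∀ x : H, ‖x‖ = 1 → ‖⟪T x, x⟫_ℂ‖ ≤ M) (x : H) :
    ‖⟪T x, x⟫_ℂ‖ ≤ M * ‖x‖ ^ 2 := by
  rcases eq_or_ne x 0 with rfl | hx
  · simp
  · have hnx : ‖x‖ ≠ 0 := norm_ne_zero_iff.mpr hx
    set u : H := (‖x‖⁻¹ : ℝ) • x with hu
    have hu1 : ‖u‖ = 1 := by
      rw [hu, norm_smul]
      simp [hnx, abs_of_nonneg (inv_nonneg.mpr (norm_nonneg x))]
    have h1 : ⟪T u, u⟫_ℂ = ((‖x‖ : ℂ) ^ 2)⁻¹ * ⟪T x, x⟫_ℂ := by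
      rw [hu, ← Complex.coe_smul, map_smul, inner_smul_left, inner_smul_right]
      rw [Complex.ofReal_inv, map_inv₀, Complex.conj_ofReal]
      ring
    have hcx : ((‖x‖ : ℂ)) ≠ 0 := by exact_mod_cast hnx
    have h2 : ⟪T x, x⟫_ℂ = (‖x‖ : ℂ) ^ 2 * ⟪T u, u⟫_ℂ := by
      rw [h1]
      field_simp
    rw [h2, norm_mul, norm_pow, Complex.norm_real, Real.norm_eq_abs,
      abs_of_nonneg (norm_nonneg x)]
    have h3 : (0:ℝ) ≤ ‖x‖ ^ 2 := sq_nonneg _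
    calc ‖x‖ ^ 2 * ‖⟪T u, u⟫_ℂ‖ ≤ ‖x‖ ^ 2 * M :=
          mul_le_mul_of_nonneg_left (hM u hu1) h3
      _ = M * ‖x‖ ^ 2 := by ring

/-- The norm of a self-adjoint operator is bounded by any bound on its numerical radius. -/
lemma sa_norm_le [CompleteSpace H] (T : H →L[ℂ] H) (hT : IsSelfAdjoint T) {M : ℝ}
    (hM0 : 0 ≤ M) (hM : ∀ x : H, ‖x‖ = 1 → ‖⟪T x, x⟫_ℂ‖ ≤ M) : ‖T‖ ≤ M := by
  have hsymm := hT.isSymmetric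
  have hall := inner_self_le T hM
  -- polarization bound on the real part of the bilinear form
  have key : ∀ x y : H, ‖x‖ = 1 → ‖y‖ = 1 → Complex.re ⟪T x, y⟫_ℂ ≤ M := by
    intro x y hx hy
    have h2 : ⟪T y, x⟫_ℂ = starRingEnd ℂ ⟪T x, y⟫_ℂ := by
      rw [(inner_conj_symm (T y) x).symm]
      exact congrArg _ (hsymm x y).symm
    have h1 : ⟪T (x + y), x + y⟫_ℂ - ⟪T (x - y), x - y⟫_ℂ
        = 2 * (⟪T x, y⟫_ℂ + ⟪T y, x⟫_ℂ) := by
      rw [map_add, map_sub, inner_add_left, inner_add_right, inner_add_right,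
        inner_sub_left, inner_sub_right, inner_sub_right]
      ring
    have hcr : ∀ z : ℂ, (2 * (z + (starRingEnd ℂ) z)).re = 4 * z.re := by
      intro z
      simp [Complex.mul_re]
      ring
    have hre : Complex.re (⟪T (x + y), x + y⟫_ℂ - ⟪T (x - y), x - y⟫_ℂ)
        = 4 * Complex.re ⟪T x, y⟫_ℂ := by
      rw [h1, h2]
      exact hcr _
    have hz1 : |Complex.re ⟪T (x + y), x + y⟫_ℂ| ≤ M * ‖x + y‖ ^ 2 :=
      le_trans (Complex.abs_re_le_norm _)
        (by exact hall _)
    have hz2 : |Complex.re ⟪T (x - y), x - y⟫_ℂ| ≤ M * ‖x - y‖ ^ 2 :=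
      le_trans (Complex.abs_re_le_norm _)
        (by exact hall _)
    have hpar : ‖x + y‖ * ‖x + y‖ + ‖x - y‖ * ‖x - y‖
        = 2 * (‖x‖ * ‖x‖ + ‖y‖ * ‖y‖) := by
        have := parallelogram_law_with_norm ℂ x y; nlinarith [this]
    rw [hx, hy] at hpar
    have e1 := abs_le.mp hz1
    have e2 := abs_le.mp hz2
    have hsub := Complex.sub_re (⟪T (x + y), x + y⟫_ℂ) (⟪T (x - y), x - y⟫_ℂ)
    nlinarith [hre, hsub, e1.2, e2.1, sq_nonneg (‖x+y‖), sq_nonneg (‖x-y‖)]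
  -- conclude the operator norm bound
  refine ContinuousLinearMap.opNorm_le_bound T hM0 (fun x => ?_)
  rcases eq_or_ne x 0 with rfl | hx
  · simp
  · have hnx : (0:ℝ) < ‖x‖ := norm_pos_iff.mpr hx
    set u : H := (‖x‖⁻¹ : ℝ) • x with hu
    have hu1 : ‖u‖ = 1 := by
      rw [hu, norm_smul]
      simp [abs_of_nonneg (inv_nonneg.mpr (norm_nonneg x)), hnx.ne']
    have hTu : ‖T u‖ ≤ M := by
      rcases eq_or_ne (T u) 0 with h0 | h0
      · simp [h0, hM0]
      · have hTn : (0:ℝ) < ‖T u‖ := norm_pos_iff.mpr h0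
        set y : H := (‖T u‖⁻¹ : ℝ) • T u with hy
        have hy1 : ‖y‖ = 1 := by
          rw [hy, norm_smul]
          simp [abs_of_nonneg (inv_nonneg.mpr (norm_nonneg (T u))), hTn.ne']
        have hiy : ⟪T u, y⟫_ℂ = ((‖T u‖ : ℝ) : ℂ) := by
          rw [hy, ← Complex.coe_smul, inner_smul_right, inner_self_eq_norm_sq_to_K]
          rw [Complex.ofReal_inv]
          have : ((‖T u‖:ℝ) : ℂ) ≠ 0 := by exact_mod_cast hTn.ne'
          field_simp
          rfl
        have hk := key u y hu1 hy1
        rw [hiy] at hk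
        simpa using hk
    have hxu : x = (‖x‖ : ℝ) • u := by
      rw [hu, smul_smul, mul_inv_cancel₀ hnx.ne', one_smul]
    calc ‖T x‖ = ‖T ((‖x‖ : ℝ) • u)‖ := by rw [← hxu]
      _ = ‖x‖ * ‖T u‖ := by
          rw [map_smul_of_tower, norm_smul]
          simp [abs_of_nonneg (norm_nonneg x)]
      _ ≤ ‖x‖ * M := mul_le_mul_of_nonneg_left hTu (norm_nonneg x)
      _ = M * ‖x‖ := by ring

/-- cube of norm of selfadjoint bounded by norm of cube -/
lemma sa_norm_cube_le [CompleteSpace H] (C : H →L[ℂ] H) (hC : IsSelfAdjoint C) :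
    ‖C‖ ^ 3 ≤ ‖C ^ 3‖ := by
  have hsq : ‖C ^ 2‖ = ‖C‖ ^ 2 := by
    have h : C ^ 2 = C * star C := by rw [hC.star_eq, sq]
    rw [h, CStarRing.norm_self_mul_star, sq]
  have h4 : ‖C ^ 4‖ = ‖C‖ ^ 4 := by
    have h2sa : IsSelfAdjoint (C ^ 2) := hC.pow 2
    have h : C ^ 4 = (C ^ 2) * star (C ^ 2) := by
      rw [h2sa.star_eq, ← pow_add]
    rw [h, CStarRing.norm_self_mul_star, hsq]
    ring
  rcases eq_or_lt_of_le (norm_nonneg C) with h0 | h0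
  · rw [← h0]
    simpa using norm_nonneg (C ^ 3)
  · have hle : ‖C ^ 4‖ ≤ ‖C ^ 3‖ * ‖C‖ := by
      rw [pow_succ C 3]
      exact norm_mul_le _ _
    rw [h4] at hle
    have h3 : ‖C‖ ^ 4 = ‖C‖ ^ 3 * ‖C‖ := by ring
    rw [h3] at hle
    exact le_of_mul_le_mul_right hle h0

/-- algebraic identity -/
lemma cube_expand {R : Type*} [Ring R] (b b' : R) :
    (b + b') ^ 3 = (b ^ 3 + b' ^ 3) + (b + b') * (b' * b + b * b')
      + (b' * b ^ 2 + b * b' ^ 2) := by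
  noncomm_ring

/-- inner product of star against self -/
lemma star_inner_self [CompleteSpace H] (X : H →L[ℂ] H) (v : H) :
    ⟪(star X) v, v⟫_ℂ = (starRingEnd ℂ) ⟪X v, v⟫_ℂ := by
  rw [show star X = ContinuousLinearMap.adjoint X from rfl,
    ContinuousLinearMap.adjoint_inner_left]
  exact (inner_conj_symm _ _).symm

end aux

set_option maxHeartbeats 1000000 in
theorem stmt15 {H : Type*} [NormedAddCommGroup H] [InnerProductSpace ℂ H]
    [CompleteSpace H] [Nontrivial H] (A : H →L[ℂ] H) :
    numRadius A ^ 3 ≤ (1/4 : ℝ) * (numRadius (A ^ 3) + ‖A‖ * ‖A ^ 2‖ +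
      numRadius A * ‖adjoint A * A + A * adjoint A‖) := by
  have hadj : adjoint A = star A := rfl
  set w : ℝ := numRadius A with hw
  set w3 : ℝ := numRadius (A ^ 3) with hw3
  set D : H →L[ℂ] H := star A * A + A * star A with hD
  rw [hadj]
  set M : ℝ := (1/4 : ℝ) * (w3 + ‖A‖ * ‖A ^ 2‖ + w * ‖D‖) with hM
  have hw0 : 0 ≤ w := numR_nonneg A
  have hw30 : 0 ≤ w3 := numR_nonneg _
  have hM0 : 0 ≤ M := by
    have h1 : (0:ℝ) ≤ ‖A‖ * ‖A ^ 2‖ := by positivity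
    have h2 : (0:ℝ) ≤ w * ‖D‖ := by positivity
    rw [hM]; nlinarith
  -- key pointwise bound
  have key : ∀ x : H, ‖x‖ = 1 → ‖⟪A x, x⟫_ℂ‖ ^ 3 ≤ M := by
    intro x hx
    set a : ℂ := ⟪A x, x⟫_ℂ with ha
    obtain ⟨c, hc1, hca⟩ := RCLike.exists_norm_eq_mul_self a
    -- B = (star c) • A satisfies ⟪B x, x⟫ = ‖a‖
    set B : H →L[ℂ] H := (star c) • A with hB
    have hcc : (starRingEnd ℂ) c * c = 1 := by
      rw [mul_comm, Complex.mul_conj]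
      norm_cast
      rw [Complex.normSq_eq_norm_sq, hc1]
      norm_num
    have hBx : ⟪B x, x⟫_ℂ = (‖a‖ : ℂ) := by
      rw [hB]
      simp only [ContinuousLinearMap.smul_apply, inner_smul_left, starRingEnd_apply,
        star_star]
      exact hca.symm
    have hsB : star B = c • star A := by
      rw [hB, star_smul, star_star]
    -- numerical radius bound for B
    have hBy : ∀ y : H, ⟪B y, y⟫_ℂ = (starRingEnd ℂ) (star c) * ⟪A y, y⟫_ℂ := by
      intro y
      rw [hB]
      simp only [ContinuousLinearMap.smul_apply, inner_smul_left]
    have hBynorm : ∀ y : H, ‖⟪B y, y⟫_ℂ‖ = ‖⟪A y, y⟫_ℂ‖ := by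
      intro y
      rw [hBy y, norm_mul]
      simp [hc1]
    -- C = B + star B
    set C : H →L[ℂ] H := B + star B with hC
    have hCsa : IsSelfAdjoint C := by
      rw [hC]
      exact IsSelfAdjoint.add_star_self B
    -- lower bound : 2‖a‖ ≤ ‖C‖
    have hCx : ⟪C x, x⟫_ℂ = 2 * (‖a‖ : ℂ) := by
      rw [hC]
      simp only [ContinuousLinearMap.add_apply, inner_add_left]
      rw [hBx]
      have : ⟪(star B) x, x⟫_ℂ = (‖a‖ : ℂ) := by
        rw [star_inner_self, hBx, Complex.conj_ofReal]
      rw [this]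
      ring
    have hlow : 2 * ‖a‖ ≤ ‖C‖ := by
      have h1 : ‖⟪C x, x⟫_ℂ‖ = 2 * ‖a‖ := by
        rw [hCx, norm_mul]
        simp
      calc 2 * ‖a‖ = ‖⟪C x, x⟫_ℂ‖ := h1.symm
        _ ≤ ‖C x‖ * ‖x‖ := norm_inner_le_norm _ _
        _ ≤ (‖C‖ * ‖x‖) * ‖x‖ := by
            have := C.le_opNorm x
            nlinarith [norm_nonneg x]
        _ = ‖C‖ := by rw [hx]; ring
    -- upper bound : ‖C‖ ≤ 2w
    have hupp : ‖C‖ ≤ 2 * w := by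
      refine sa_norm_le C hCsa (by positivity) (fun y hy => ?_)
      have : ⟪C y, y⟫_ℂ = 2 * (((⟪B y, y⟫_ℂ).re : ℝ) : ℂ) := by
        rw [hC]
        simp only [ContinuousLinearMap.add_apply, inner_add_left]
        rw [star_inner_self, Complex.add_conj]
        push_cast
        ring
      rw [this, norm_mul]
      have h2 : ‖(((⟪B y, y⟫_ℂ).re : ℝ) : ℂ)‖ ≤ ‖⟪B y, y⟫_ℂ‖ := by
        rw [Complex.norm_real, Real.norm_eq_abs]
        exact Complex.abs_re_le_norm _
      have h3 : ‖⟪B y, y⟫_ℂ‖ ≤ w := by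
        rw [hBynorm y]
        exact le_numR A hy
      have : ‖(2:ℂ)‖ = 2 := by norm_num
      rw [this]
      nlinarith
    -- norm cube
    have hcube : ‖C‖ ^ 3 ≤ ‖C ^ 3‖ := sa_norm_cube_le C hCsa
    -- expansion
    have hexp : C ^ 3 = (B ^ 3 + star B ^ 3) + C * (star B * B + B * star B)
        + (star B * B ^ 2 + B * star B ^ 2) := by
      rw [hC]
      exact cube_expand B (star B)
    -- middle term : star B * B + B * star B = D
    have hmid : star B * B + B * star B = D := by
      rw [hsB, hB, hD]
      rw [smul_mul_assoc, mul_smul_comm, smul_smul, smul_mul_assoc, mul_smul_comm, smul_smul]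
      have h1 : c * star c = 1 := by
        rw [show star c = (starRingEnd ℂ) c from rfl]
        rw [mul_comm]
        exact hcc
      have h2 : star c * c = 1 := by
        rw [mul_comm]
        exact h1
      rw [h1, h2, one_smul, one_smul]
    -- first term bound
    have hfirst : ‖B ^ 3 + star B ^ 3‖ ≤ 2 * w3 := by
      have hsa3 : IsSelfAdjoint (B ^ 3 + star B ^ 3) := by
        rw [← star_pow]
        exact IsSelfAdjoint.add_star_self (B ^ 3)
      refine sa_norm_le _ hsa3 (by positivity) (fun y hy => ?_)
      have hBA3 : B ^ 3 = (star c) ^ 3 • A ^ 3 := by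
        rw [hB, smul_pow]
      have hval : ⟪(B ^ 3 + star B ^ 3) y, y⟫_ℂ
          = 2 * (((⟪(B ^ 3) y, y⟫_ℂ).re : ℝ) : ℂ) := by
        rw [← star_pow]
        simp only [ContinuousLinearMap.add_apply, inner_add_left]
        rw [star_inner_self, Complex.add_conj]
        push_cast
        ring
      rw [hval, norm_mul]
      have h2 : ‖(((⟪(B ^ 3) y, y⟫_ℂ).re : ℝ) : ℂ)‖ ≤ ‖⟪(B ^ 3) y, y⟫_ℂ‖ := by
        rw [Complex.norm_real, Real.norm_eq_abs]
        exact Complex.abs_re_le_norm _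
      have h3 : ‖⟪(B ^ 3) y, y⟫_ℂ‖ ≤ w3 := by
        have : ⟪(B ^ 3) y, y⟫_ℂ = (starRingEnd ℂ) ((star c) ^ 3) * ⟪(A ^ 3) y, y⟫_ℂ := by
          rw [hBA3]
          simp only [ContinuousLinearMap.smul_apply, inner_smul_left]
        rw [this, norm_mul]
        have hcn : ‖(starRingEnd ℂ) ((star c) ^ 3)‖ = 1 := by
          simp [norm_pow, hc1]
        rw [hcn, one_mul]
        exact le_numR (A ^ 3) hy
      have h4 : ‖(2:ℂ)‖ = 2 := by norm_num
      rw [h4]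
      nlinarith
    -- last term bound
    have hBnorm : ‖B‖ = ‖A‖ := by
      rw [hB, norm_smul]
      simp [hc1]
    have hB2norm : ‖B ^ 2‖ = ‖A ^ 2‖ := by
      rw [hB, smul_pow, norm_smul]
      simp [norm_pow, hc1]
    have hlast : ‖star B * B ^ 2 + B * star B ^ 2‖ ≤ 2 * (‖A‖ * ‖A ^ 2‖) := by
      calc ‖star B * B ^ 2 + B * star B ^ 2‖
          ≤ ‖star B * B ^ 2‖ + ‖B * star B ^ 2‖ := norm_add_le _ _
        _ ≤ ‖star B‖ * ‖B ^ 2‖ + ‖B‖ * ‖star B ^ 2‖ := by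
            gcongr <;> exact norm_mul_le _ _
        _ = ‖A‖ * ‖A ^ 2‖ + ‖A‖ * ‖A ^ 2‖ := by
            rw [← star_pow, norm_star, norm_star, hBnorm, hB2norm]
        _ = 2 * (‖A‖ * ‖A ^ 2‖) := by ring
    -- combine
    have htot : ‖C ^ 3‖ ≤ 2 * w3 + (2 * w) * ‖D‖ + 2 * (‖A‖ * ‖A ^ 2‖) := by
      rw [hexp]
      calc ‖(B ^ 3 + star B ^ 3) + C * (star B * B + B * star B)
            + (star B * B ^ 2 + B * star B ^ 2)‖
          ≤ ‖B ^ 3 + star B ^ 3‖ + ‖C * (star B * B + B * star B)‖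
            + ‖star B * B ^ 2 + B * star B ^ 2‖ := norm_add₃_le
        _ ≤ (2 * w3) + (2 * w) * ‖D‖ + 2 * (‖A‖ * ‖A ^ 2‖) := by
            gcongr
            calc ‖C * (star B * B + B * star B)‖
                ≤ ‖C‖ * ‖star B * B + B * star B‖ := norm_mul_le _ _
              _ = ‖C‖ * ‖D‖ := by rw [hmid]
              _ ≤ (2 * w) * ‖D‖ := by
                  have := norm_nonneg D
                  nlinarith
    have h8 : (2 * ‖a‖) ^ 3 ≤ 2 * w3 + (2 * w) * ‖D‖ + 2 * (‖A‖ * ‖A ^ 2‖) := by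
      calc (2 * ‖a‖) ^ 3 ≤ ‖C‖ ^ 3 := by
            have h0 : (0:ℝ) ≤ 2 * ‖a‖ := by positivity
            exact pow_le_pow_left₀ h0 hlow 3
        _ ≤ ‖C ^ 3‖ := hcube
        _ ≤ _ := htot
    nlinarith [h8]
  -- conclude via sup
  have hsup : w ≤ M ^ ((1:ℝ)/3) := by
    rw [hw, numRadius]
    refine csSup_le ?_ ?_
    · obtain ⟨x, hx⟩ := exists_norm_eq H (zero_le_one)
      exact ⟨‖⟪A x, x⟫_ℂ‖, x, hx, rfl⟩
    · rintro r ⟨x, hx, rfl⟩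
      have hr0 : (0:ℝ) ≤ ‖⟪A x, x⟫_ℂ‖ := norm_nonneg _
      have hk := key x hx
      have : ‖⟪A x, x⟫_ℂ‖ = (‖⟪A x, x⟫_ℂ‖ ^ (3:ℕ)) ^ ((1:ℝ)/3) := by
        rw [← Real.rpow_natCast ‖⟪A x, x⟫_ℂ‖ 3, ← Real.rpow_mul hr0]
        norm_num
      rw [this]
      exact Real.rpow_le_rpow (by positivity) hk (by norm_num)
  have hM13 : (M ^ ((1:ℝ)/3)) ^ (3:ℕ) = M := by
    rw [← Real.rpow_natCast (M ^ ((1:ℝ)/3)) 3, ← Real.rpow_mul hM0]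
    norm_num
  calc w ^ 3 ≤ (M ^ ((1:ℝ)/3)) ^ 3 := pow_le_pow_left₀ hw0 hsup 3
    _ = M := hM13
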